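/- Fix x* > 0 and t₁ > 0, and let u, v : [0,x*] → ℝ be continuous with t₁ ≤ τ*_v ≤ τ*_u.ue Then for every t ∈ [τ*_v, τ*_u], |Υ^u(t) − Υ^v(τ*_v)| ≤ A_u·(1/2)·(x*)²·M_{u,v}·‖u − v‖, where A_u = (x*/t₁)·exp(2‖u‖) and M_{u,v} = exp(max(‖u‖,‖v‖)). (Note Υ^v(τ*_v) = x*.) -/

import Mathlib

open Set

noncomputable def Fu (xs : ℝ) (h : 0 ≤ xs) (u : C(Icc (0:ℝ) xs, ℝ)) (x : ℝ) : ℝ :=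
  ∫ z in (0:ℝ)..x, Real.exp (-(u (projIcc 0 xs h z)))

noncomputable def Wu (xs : ℝ) (h : 0 ≤ xs) (u : C(Icc (0:ℝ) xs, ℝ)) (x : ℝ) : ℝ :=
  ∫ ξ in (0:ℝ)..x, Fu xs h u ξ

noncomputable def tau (xs : ℝ) (h : 0 ≤ xs) (u : C(Icc (0:ℝ) xs, ℝ)) : ℝ :=
  Wu xs h u xs


open intervalIntegral MeasureTheory

section Aux
variable {xs : ℝ} (h : 0 ≤ xs) (u v : C(Icc (0:ℝ) xs, ℝ))

lemma exp_diff_le (a b : ℝ) : |Real.exp a - Real.exp b| ≤ Real.exp (max a b) * |a - b| := by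
  have key : ∀ a b : ℝ, a ≤ b → Real.exp b - Real.exp a ≤ Real.exp b * (b - a) := by
    intro a b hab
    have h1 := Real.add_one_le_exp (a - b)
    have h2 : Real.exp a = Real.exp b * Real.exp (a - b) := by
      rw [← Real.exp_add]; ring_nf
    nlinarith [Real.exp_pos b]
  rcases le_total a b with h | h
  · rw [abs_sub_comm, abs_of_nonneg (by simp [Real.exp_le_exp, h] : (0:ℝ) ≤ Real.exp b - Real.exp a),
      max_eq_right h, abs_of_nonpos (by linarith)]
    have := key a b h; linarith
  · rw [abs_of_nonneg (by simp [Real.exp_le_exp, h] : (0:ℝ) ≤ Real.exp a - Real.exp b),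
      max_eq_left h, abs_of_nonneg (by linarith)]
    exact key b a h

lemma g_cont : Continuous (fun z => Real.exp (-(u (projIcc 0 xs h z)))) :=
  Real.continuous_exp.comp ((u.continuous.comp (continuous_projIcc)).neg)

lemma g_le : ∀ z : ℝ, Real.exp (-(u (projIcc 0 xs h z))) ≤ Real.exp ‖u‖ := by
  intro z
  have hb : |u (projIcc 0 xs h z)| ≤ ‖u‖ := by
    simpa [Real.norm_eq_abs] using u.norm_coe_le_norm (projIcc 0 xs h z)
  exact Real.exp_le_exp.2 (by linarith [(abs_le.1 hb).1])

lemma g_ge : ∀ z : ℝ, Real.exp (-‖u‖) ≤ Real.exp (-(u (projIcc 0 xs h z))) := by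
  intro z
  have hb : |u (projIcc 0 xs h z)| ≤ ‖u‖ := by
    simpa [Real.norm_eq_abs] using u.norm_coe_le_norm (projIcc 0 xs h z)
  exact Real.exp_le_exp.2 (by linarith [(abs_le.1 hb).2])

lemma g_diff_le (z : ℝ) :
    |Real.exp (-(u (projIcc 0 xs h z))) - Real.exp (-(v (projIcc 0 xs h z)))| ≤
      Real.exp (max ‖u‖ ‖v‖) * ‖u - v‖ := by
  set p := projIcc 0 xs h z
  have h1 := exp_diff_le (-(u p)) (-(v p))
  have hu : |u p| ≤ ‖u‖ := by simpa [Real.norm_eq_abs] using u.norm_coe_le_norm p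
  have hv : |v p| ≤ ‖v‖ := by simpa [Real.norm_eq_abs] using v.norm_coe_le_norm p
  have h2 : Real.exp (max (-(u p)) (-(v p))) ≤ Real.exp (max ‖u‖ ‖v‖) := by
    apply Real.exp_le_exp.2
    apply max_le
    · exact le_trans (by linarith [(abs_le.1 hu).1]) (le_max_left _ _)
    · exact le_trans (by linarith [(abs_le.1 hv).1]) (le_max_right _ _)
  have h3 : |(-(u p)) - (-(v p))| = |(u - v) p| := by
    rw [ContinuousMap.sub_apply]; rw [abs_sub_comm]; ring_nf
  have h4 : |(u - v) p| ≤ ‖u - v‖ := by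
    simpa [Real.norm_eq_abs] using (u - v).norm_coe_le_norm p
  calc |Real.exp (-(u p)) - Real.exp (-(v p))|
      ≤ Real.exp (max (-(u p)) (-(v p))) * |(-(u p)) - (-(v p))| := h1
    _ ≤ Real.exp (max ‖u‖ ‖v‖) * ‖u - v‖ := by
        apply mul_le_mul h2 (h3 ▸ h4) (abs_nonneg _) (Real.exp_pos _).le

lemma F_mono : Monotone (Fu xs h u) := by
  intro a b hab
  have hint : ∀ c d : ℝ, IntervalIntegrable (fun z => Real.exp (-(u (projIcc 0 xs h z)))) volume c d :=
    fun c d => (g_cont h u).intervalIntegrable c d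
  have : Fu xs h u b - Fu xs h u a = ∫ z in a..b, Real.exp (-(u (projIcc 0 xs h z))) := by
    rw [Fu, Fu, ← intervalIntegral.integral_add_adjacent_intervals (hint 0 a) (hint a b)]
    ring
  have hnn := intervalIntegral.integral_nonneg (f := fun z => Real.exp (-(u (projIcc 0 xs h z))))
    (μ := volume) hab (fun x _ => (Real.exp_pos _).le)
  linarith

lemma F_le (x : ℝ) (hx : 0 ≤ x) : Fu xs h u x ≤ x * Real.exp ‖u‖ := by
  have := intervalIntegral.integral_mono_on (μ := volume) hx ((g_cont h u).intervalIntegrable 0 x)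
    (continuous_const.intervalIntegrable _ _) (fun z _ => g_le h u z)
  simpa [Fu] using this

lemma F_ge (x : ℝ) (hx : 0 ≤ x) : x * Real.exp (-‖u‖) ≤ Fu xs h u x := by
  have := intervalIntegral.integral_mono_on (μ := volume) hx (continuous_const.intervalIntegrable _ _)
    ((g_cont h u).intervalIntegrable 0 x) (fun z _ => g_ge h u z)
  simpa [Fu] using this

lemma F_int : ∀ a b : ℝ, IntervalIntegrable (Fu xs h u) volume a b :=
  fun _ _ => (F_mono h u).intervalIntegrable

lemma F_diff_le (ξ : ℝ) (hξ : 0 ≤ ξ) :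
    Fu xs h u ξ - Fu xs h v ξ ≤ ξ * (Real.exp (max ‖u‖ ‖v‖) * ‖u - v‖) := by
  have hsub : Fu xs h u ξ - Fu xs h v ξ =
      ∫ z in (0:ℝ)..ξ, (Real.exp (-(u (projIcc 0 xs h z))) - Real.exp (-(v (projIcc 0 xs h z)))) := by
    rw [Fu, Fu, intervalIntegral.integral_sub ((g_cont h u).intervalIntegrable 0 ξ)
      ((g_cont h v).intervalIntegrable 0 ξ)]
  rw [hsub]
  have := intervalIntegral.integral_mono_on (μ := volume) hξ
    (((g_cont h u).sub (g_cont h v)).intervalIntegrable 0 ξ)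
    (continuous_const.intervalIntegrable _ _)
    (fun z _ => le_trans (le_abs_self _) (g_diff_le h u v z))
  have h2 : ∫ _z in (0:ℝ)..ξ, Real.exp (max ‖u‖ ‖v‖) * ‖u - v‖ = ξ * (Real.exp (max ‖u‖ ‖v‖) * ‖u - v‖) := by
    rw [intervalIntegral.integral_const]; simp
  simp only [Pi.sub_apply] at this
  linarith [h2 ▸ this]

lemma W_sub (a b : ℝ) : Wu xs h u b - Wu xs h u a = ∫ ξ in a..b, Fu xs h u ξ := by
  rw [Wu, Wu, ← intervalIntegral.integral_add_adjacent_intervals (F_int h u 0 a) (F_int h u a b)]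
  ring

lemma W_le (y : ℝ) (hy : 0 ≤ y) : Wu xs h u y ≤ y^2/2 * Real.exp ‖u‖ := by
  have h1 : Wu xs h u y ≤ ∫ ξ in (0:ℝ)..y, ξ * Real.exp ‖u‖ := by
    refine intervalIntegral.integral_mono_on hy (F_int h u 0 y) ?_ ?_
    · exact ((continuous_id.mul continuous_const)).intervalIntegrable 0 y
    · exact fun ξ hξ => F_le h u ξ hξ.1
  have h2 : ∫ ξ in (0:ℝ)..y, ξ * Real.exp ‖u‖ = y^2/2 * Real.exp ‖u‖ := by
    rw [intervalIntegral.integral_mul_const, integral_id]; try ring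
  linarith

lemma W_mono_strict {a b : ℝ} (ha : 0 ≤ a) (hab : a < b) : Wu xs h u a < Wu xs h u b := by
  have h1 : ∫ ξ in a..b, ξ * Real.exp (-‖u‖) ≤ ∫ ξ in a..b, Fu xs h u ξ := by
    refine intervalIntegral.integral_mono_on hab.le ?_ (F_int h u a b) ?_
    · exact ((continuous_id.mul continuous_const)).intervalIntegrable a b
    · exact fun ξ hξ => F_ge h u ξ (le_trans ha hξ.1)
  have h2 : ∫ ξ in a..b, ξ * Real.exp (-‖u‖) = (b^2 - a^2)/2 * Real.exp (-‖u‖) := by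
    rw [intervalIntegral.integral_mul_const, integral_id]; try ring
  have h3 := W_sub h u a b
  have hba : a^2 < b^2 := by nlinarith
  nlinarith [Real.exp_pos (-‖u‖)]

lemma tau_diff : Wu xs h u xs - Wu xs h v xs ≤ xs^2/2 * (Real.exp (max ‖u‖ ‖v‖) * ‖u - v‖) := by
  have hsub : Wu xs h u xs - Wu xs h v xs = ∫ ξ in (0:ℝ)..xs, (Fu xs h u ξ - Fu xs h v ξ) := by
    rw [Wu, Wu, intervalIntegral.integral_sub (F_int h u 0 xs) (F_int h v 0 xs)]
  rw [hsub]
  have h1 : ∫ ξ in (0:ℝ)..xs, (Fu xs h u ξ - Fu xs h v ξ) ≤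
      ∫ ξ in (0:ℝ)..xs, ξ * (Real.exp (max ‖u‖ ‖v‖) * ‖u - v‖) := by
    refine intervalIntegral.integral_mono_on h ((F_int h u 0 xs).sub (F_int h v 0 xs)) ?_ ?_
    · exact ((continuous_id.mul continuous_const)).intervalIntegrable 0 xs
    · exact fun ξ hξ => F_diff_le h u v ξ hξ.1
  have h2 : ∫ ξ in (0:ℝ)..xs, ξ * (Real.exp (max ‖u‖ ‖v‖) * ‖u - v‖) =
      xs^2/2 * (Real.exp (max ‖u‖ ‖v‖) * ‖u - v‖) := by
    rw [intervalIntegral.integral_mul_const, integral_id]; try ring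
  linarith

end Aux

/-- if `t₁ ≤ τ*_v ≤ τ*_u` then for every `t ∈ [τ*_v, τ*_u]`,
`|Υ^u(t) - Υ^v(τ*_v)| ≤ A_u·(1/2)·(x*)²·M_{u,v}·‖u - v‖`. -/
theorem stmt_14 (xs : ℝ) (hxs : 0 < xs) (t₁ : ℝ) (ht₁ : 0 < t₁)
    (u v : C(Icc (0:ℝ) xs, ℝ)) (Υu Υv : ℝ → ℝ)
    (hΥu : ∀ s ∈ Icc (0:ℝ) (tau xs hxs.le u), Υu s ∈ Icc 0 xs ∧ Wu xs hxs.le u (Υu s) = s)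
    (hΥv : ∀ s ∈ Icc (0:ℝ) (tau xs hxs.le v), Υv s ∈ Icc 0 xs ∧ Wu xs hxs.le v (Υv s) = s)
    (hτ₁ : t₁ ≤ tau xs hxs.le v) (hττ : tau xs hxs.le v ≤ tau xs hxs.le u)
    (t : ℝ) (ht : t ∈ Icc (tau xs hxs.le v) (tau xs hxs.le u)) :
    |Υu t - Υv (tau xs hxs.le v)| ≤
      xs / t₁ * Real.exp (2 * ‖u‖) *
        (1 / 2 * xs ^ 2 * Real.exp (max ‖u‖ ‖v‖) * ‖u - v‖) := by
  set τv := tau xs hxs.le v with hτv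
  set τu := tau xs hxs.le u with hτu
  set E := Real.exp ‖u‖ with hE
  set M := Real.exp (max ‖u‖ ‖v‖) with hM
  have hEpos := Real.exp_pos ‖u‖
  have hMuv : 0 ≤ M * ‖u - v‖ := mul_nonneg (Real.exp_pos _).le (norm_nonneg _)
  -- Υv τv = xs
  have hvmem : τv ∈ Icc (0:ℝ) τv := ⟨by linarith, le_refl _⟩
  obtain ⟨hyv_mem, hyv_eq⟩ := hΥv τv hvmem
  have hyv : Υv τv = xs := by
    rcases lt_or_eq_of_le hyv_mem.2 with hlt | heq
    · exfalso
      have := W_mono_strict hxs.le v hyv_mem.1 hlt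
      rw [hyv_eq] at this
      exact absurd this (by simp [hτv, tau])
    · exact heq
  -- facts about y = Υu t
  have htmem : t ∈ Icc (0:ℝ) τu := ⟨by linarith [ht.1], ht.2⟩
  obtain ⟨hy_mem, hy_eq⟩ := hΥu t htmem
  set y := Υu t with hy
  have hy0 : 0 ≤ y := hy_mem.1
  have hyxs : y ≤ xs := hy_mem.2
  -- lower bound on t via Wu y
  have hWle : Wu xs hxs.le u y ≤ y^2/2 * E := W_le hxs.le u y hy0
  have ht1t : t₁ ≤ t := le_trans hτ₁ ht.1
  have htyE : t ≤ y * xs * E := by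
    have : y^2/2 ≤ y * xs := by nlinarith
    nlinarith [hy_eq]
  -- Fu y lower bound
  have hFge : y * Real.exp (-‖u‖) ≤ Fu xs hxs.le u y := F_ge hxs.le u y hy0
  have hyF : y ≤ Fu xs hxs.le u y * E := by
    have hEm : Real.exp (-‖u‖) * E = 1 := by
      rw [hE, ← Real.exp_add]; simp
    nlinarith [Real.exp_pos (-‖u‖)]
  -- Wu xs - Wu y ≥ (xs - y) * Fu y
  have hWW : (xs - y) * Fu xs hxs.le u y ≤ τu - t := by
    have hsub : τu - t = ∫ ξ in y..xs, Fu xs hxs.le u ξ := by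
      rw [hτu, tau, ← hy_eq]; exact W_sub hxs.le u y xs
    have hmono : ∫ ξ in y..xs, Fu xs hxs.le u y ≤ ∫ ξ in y..xs, Fu xs hxs.le u ξ := by
      refine intervalIntegral.integral_mono_on (μ := volume) hyxs
        (continuous_const.intervalIntegrable _ _) (F_int hxs.le u y xs) ?_
      exact fun ξ hξ => F_mono hxs.le u hξ.1
    rw [hsub]
    simpa [smul_eq_mul] using hmono
  -- tau difference bound
  have hDiff : τu - τv ≤ xs^2/2 * (M * ‖u - v‖) := tau_diff hxs.le u v
  have hchain : (xs - y) * Fu xs hxs.le u y ≤ xs^2/2 * (M * ‖u - v‖) := by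
    linarith [ht.1]
  -- final algebra
  have hxy : 0 ≤ xs - y := by linarith
  have hgoal : t₁ * (xs - y) ≤ xs * (E * E) * (xs^2/2 * (M * ‖u - v‖)) := by
    have c1 : t₁ * (xs - y) ≤ t * (xs - y) := mul_le_mul_of_nonneg_right ht1t hxy
    have c2 : t * (xs - y) ≤ (y * xs * E) * (xs - y) := mul_le_mul_of_nonneg_right htyE hxy
    have c4 : (y * xs * E) * (xs - y) ≤ ((Fu xs hxs.le u y * E) * xs * E) * (xs - y) := by
      have := mul_le_mul_of_nonneg_right hyF (mul_nonneg (mul_nonneg hxs.le hEpos.le) hxy)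
      nlinarith
    have c5 : ((Fu xs hxs.le u y * E) * xs * E) * (xs - y) =
        (xs * (E * E)) * ((xs - y) * Fu xs hxs.le u y) := by ring
    have c6 : (xs * (E * E)) * ((xs - y) * Fu xs hxs.le u y) ≤
        (xs * (E * E)) * (xs^2/2 * (M * ‖u - v‖)) :=
      mul_le_mul_of_nonneg_left hchain (by positivity)
    linarith [c5 ▸ c4]
  have hE2 : Real.exp (2 * ‖u‖) = E * E := by
    rw [hE, two_mul, Real.exp_add]
  rw [hyv, abs_sub_comm, abs_of_nonneg hxy, hE2]
  rw [div_mul_eq_mul_div, div_mul_eq_mul_div, le_div_iff₀ ht₁]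
  nlinarith [hgoal]
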